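/- In the cube GPT (ℝ⁴, C, u) with C = {(x₀,x₁,x₂,x₃) : x₀ ≥ max(|x₁|,|x₂|,|x₃|)} and u(x)=x₀, the three vertex states ω₁ = (1,1,1,1), ω₂ = (1,-1,1,-1), ω₃ = (1,-1,-1,1) are NOT jointly perfectly distinguishable: there is no measurement (f₁,f₂,f₃) with each fₖ ≥ 0 on C, f₁+f₂+f₃ = u, and fₖ(ωᵢ) = δ_{ki}. -/

import Mathlib

/-- In the cube GPT `(ℝ⁴, C, u)` with `C = {x : x₀ ≥ max(|x₁|,|x₂|,|x₃|)}` and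
`u(x) = x₀`, the vertex states `ω₁ = (1,1,1,1)`, `ω₂ = (1,-1,1,-1)`, `ω₃ = (1,-1,-1,1)`
are not jointly perfectly distinguishable: there is no measurement `(f₁,f₂,f₃)` with
each `fₖ ≥ 0` on `C`, `f₁+f₂+f₃ = u`, and `fₖ(ωᵢ) = δₖᵢ`. -/
theorem cube_states_not_jointly_distinguishable :
    let C : Set (Fin 4 → ℝ) := {x | |x 1| ≤ x 0 ∧ |x 2| ≤ x 0 ∧ |x 3| ≤ x 0}
    let ω : Fin 3 → (Fin 4 → ℝ) := ![![1, 1, 1, 1], ![1, -1, 1, -1], ![1, -1, -1, 1]]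
    ¬ ∃ f : Fin 3 → ((Fin 4 → ℝ) →ₗ[ℝ] ℝ),
      (∀ k, ∀ x ∈ C, 0 ≤ f k x) ∧
      (∀ x : Fin 4 → ℝ, (∑ k, f k) x = x 0) ∧
      (∀ k i : Fin 3, f k (ω i) = if k = i then 1 else 0) := by
  intro C ω
  rintro ⟨f, hpos, hsum, hδ⟩
  set ρ : Fin 4 → ℝ := ![1, 1, -1, -1] with hρ
  set σ : Fin 3 → (Fin 4 → ℝ) :=
    ![![1, -1, -1, -1], ![1, 1, -1, 1], ![1, 1, 1, -1]] with hσdef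
  have hσC : ∀ k, σ k ∈ C := by
    intro k
    fin_cases k <;> refine ⟨?_, ?_, ?_⟩ <;> norm_num [hσdef] <;> simp [Matrix.vecHead, Matrix.vecTail]
  have key : ∀ k, ρ = (2 : ℝ) • σ k + (2 : ℝ) • ω k - (ω 0 + ω 1 + ω 2) := by
    intro k
    fin_cases k <;> (funext i; fin_cases i <;> simp [hρ, hσdef, ω] <;> norm_num)
  have hfρ : ∀ k, (1 : ℝ) ≤ f k ρ := by
    intro k
    have h1 : f k ρ = 2 * f k (σ k) + 2 * f k (ω k) - (f k (ω 0) + f k (ω 1) + f k (ω 2)) := by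
      rw [key k]
      simp [map_add, map_sub, map_smul, smul_eq_mul]
    have h2 : f k (ω 0) + f k (ω 1) + f k (ω 2) = 1 := by
      fin_cases k <;> simp [hδ]
    have h3 : f k (ω k) = 1 := by rw [hδ k k]; simp
    have h4 : 0 ≤ f k (σ k) := hpos k _ (hσC k)
    rw [h1, h2, h3]
    linarith
  have hs : (∑ k, f k) ρ = 1 := by
    rw [hsum ρ]; norm_num [hρ]
  rw [LinearMap.sum_apply] at hs
  have : (3 : ℝ) ≤ ∑ k : Fin 3, f k ρ := by
    rw [Fin.sum_univ_three]
    linarith [hfρ 0, hfρ 1, hfρ 2]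
  linarith
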